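/- Let 0<q<1, λ>0, μ>0, and suppose e ≥ η_{λμ,q} = (2λμ(1−q))^{1/(2−q)}. If μ > q/(2σ) for some σ > 0, then σ > λq(1−q)e^{q−2}. In particular, if λ_min(A_IᵀA_I) ≥ σ and every support entry of x* has magnitude at least η_{λμ,q}, then A_IᵀA_I + λq(q−1)Λ(x*_I) is positive definite. -/

import Mathlib

open Finset

/-- Sufficient condition (b) of Theorem 3.7: if `e ≥ η = (2λμ(1−q))^(1/(2−q))`
and `μ > q/(2σ)` with `σ > 0`, then `σ > λq(1−q)e^(q−2)`; in particular, if
`λ_min(A_IᵀA_I) ≥ σ` and every support entry of `x*` has magnitude at least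
`η`, then `A_IᵀA_I + λq(q−1)Λ(x*_I)` is positive definite. -/
theorem gaita_suff_cond_b (m N : ℕ) (A : Matrix (Fin m) (Fin N) ℝ)
    (q lam mu e sigma : ℝ) (hq0 : 0 < q) (hq1 : q < 1) (hlam : 0 < lam)
    (hmu : 0 < mu) (hsigma0 : 0 < sigma) (hmusig : q / (2 * sigma) < mu)
    (he : (2 * lam * mu * (1 - q)) ^ ((1 : ℝ) / (2 - q)) ≤ e)
    (xstar : Fin N → ℝ) (I : Finset (Fin N)) (hI : ∀ i, i ∈ I ↔ xstar i ≠ 0)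
    (hxstar : ∀ i ∈ I, (2 * lam * mu * (1 - q)) ^ ((1 : ℝ) / (2 - q)) ≤ |xstar i|)
    (hsigma : ∀ h : Fin N → ℝ, (∀ i ∉ I, h i = 0) →
      sigma * ∑ i ∈ I, h i ^ 2 ≤ ∑ i ∈ I, ∑ j ∈ I, h i * (∑ l, A l i * A l j) * h j) :
    lam * q * (1 - q) * e ^ (q - 2) < sigma ∧
    (∀ h : Fin N → ℝ, (∀ i ∉ I, h i = 0) → h ≠ 0 →
      0 < (∑ i ∈ I, ∑ j ∈ I, h i * (∑ l, A l i * A l j) * h j) +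
        lam * q * (q - 1) * ∑ i ∈ I, |xstar i| ^ (q - 2) * h i ^ 2) := by
  have hq2 : (0:ℝ) < 2 - q := by linarith
  have hc0 : (0:ℝ) < 2 * lam * mu * (1 - q) := by nlinarith [mul_pos hlam hmu]
  set c := 2 * lam * mu * (1 - q) with hc
  have hη0 : 0 < c ^ ((1:ℝ)/(2-q)) := Real.rpow_pos_of_pos hc0 _
  have hηpow : (c ^ ((1:ℝ)/(2-q))) ^ (q - 2) = c⁻¹ := by
    rw [← Real.rpow_mul hc0.le, show (1:ℝ)/(2-q) * (q-2) = -1 by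
      field_simp; ring, Real.rpow_neg_one]
  have hkey : lam * q * (1 - q) * c⁻¹ = q / (2 * mu) := by
    rw [hc]; field_simp [show (1:ℝ) - q ≠ 0 by linarith]
  have hqmu : q / (2 * mu) < sigma := by
    rw [div_lt_iff₀ (by positivity)] at hmusig ⊢
    nlinarith
  have hcoef : 0 < lam * q * (1 - q) := by nlinarith [mul_pos hlam hq0]
  constructor
  · have hmono : e ^ (q - 2) ≤ (c ^ ((1:ℝ)/(2-q))) ^ (q - 2) :=
      Real.rpow_le_rpow_of_nonpos hη0 he (by linarith)
    rw [hηpow] at hmono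
    calc lam * q * (1 - q) * e ^ (q - 2) ≤ lam * q * (1 - q) * c⁻¹ :=
          by exact mul_le_mul_of_nonneg_left hmono hcoef.le
      _ = q / (2 * mu) := hkey
      _ < sigma := hqmu
  · intro h hsupp hne
    obtain ⟨i0, hi0⟩ : ∃ i, h i ≠ 0 := Function.ne_iff.mp hne
    have hi0I : i0 ∈ I := by
      by_contra hx; exact hi0 (hsupp i0 hx)
    have hT : 0 < ∑ i ∈ I, h i ^ 2 := by
      have := Finset.single_le_sum (f := fun i => h i ^ 2)
        (fun i _ => sq_nonneg _) hi0I
      have : 0 < h i0 ^ 2 := by positivity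
      calc (0:ℝ) < h i0 ^ 2 := this
        _ ≤ ∑ i ∈ I, h i ^ 2 := Finset.single_le_sum
            (f := fun i => h i ^ 2) (fun i _ => sq_nonneg _) hi0I
    have hS : ∑ i ∈ I, |xstar i| ^ (q - 2) * h i ^ 2
        ≤ c⁻¹ * ∑ i ∈ I, h i ^ 2 := by
      rw [Finset.mul_sum]
      refine Finset.sum_le_sum fun i hi => ?_
      have hmono : |xstar i| ^ (q - 2) ≤ (c ^ ((1:ℝ)/(2-q))) ^ (q - 2) :=
        Real.rpow_le_rpow_of_nonpos hη0 (hxstar i hi) (by linarith)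
      rw [hηpow] at hmono
      exact mul_le_mul_of_nonneg_right hmono (sq_nonneg _)
    have hQ := hsigma h hsupp
    have hneg : lam * q * (q - 1) * ∑ i ∈ I, |xstar i| ^ (q - 2) * h i ^ 2
        ≥ -(q / (2 * mu)) * ∑ i ∈ I, h i ^ 2 := by
      have : lam * q * (q - 1) * ∑ i ∈ I, |xstar i| ^ (q - 2) * h i ^ 2
          = -(lam * q * (1 - q) * ∑ i ∈ I, |xstar i| ^ (q - 2) * h i ^ 2) := by
        ring
      rw [this]
      have := mul_le_mul_of_nonneg_left hS hcoef.le
      rw [← mul_assoc, hkey] at this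
      linarith
    nlinarith [mul_lt_mul_of_pos_right hqmu hT]
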